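/- Let R be a symmetric nonnegative n×n matrix with zero diagonal and λ(R) = λ < 1. For 0 ≤ σ ≤ 1, let R^σ be R with its strict upper triangle multiplied by σ. If σ = λ/(2−λ), then λ(R^σ) ≤ σ. -/

import Mathlib

open Matrix

/-- The spectral radius of a real square matrix: the supremum of the absolute
values of its (complex) eigenvalues, i.e. of the roots of its characteristic
polynomial over `ℂ`. -/
noncomputable def specRad {n : ℕ} (R : Matrix (Fin n) (Fin n) ℝ) : ℝ :=
  sSup {r : ℝ | ∃ μ : ℂ, ((R.map (fun a => (a : ℂ))).charpoly).IsRoot μ ∧ r = ‖μ‖}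

/-- `upperScale R σ` is `R` with its strict upper triangle multiplied by `σ`. -/
def upperScale {n : ℕ} (R : Matrix (Fin n) (Fin n) ℝ) (σ : ℝ) :
    Matrix (Fin n) (Fin n) ℝ :=
  Matrix.of fun i j => if i < j then σ * R i j else R i j

/- ## Auxiliary lemmas -/

lemma isRoot_charpoly_iff {n : ℕ} {K : Type*} [Field K] (M : Matrix (Fin n) (Fin n) K) (μ : K) :
    M.charpoly.IsRoot μ ↔ ∃ x, x ≠ 0 ∧ M *ᵥ x = μ • x := by
  have h1 : Polynomial.eval μ M.charpoly = ((charmatrix M).map (Polynomial.evalRingHom μ)).det :=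
    RingHom.map_det (Polynomial.evalRingHom μ) _
  have h2 : (charmatrix M).map (Polynomial.evalRingHom μ)
      = μ • (1 : Matrix (Fin n) (Fin n) K) - M := by
    ext i j
    by_cases h : i = j
    · subst h; simp [charmatrix_apply_eq, Matrix.map_apply, Matrix.one_apply]
    · simp [charmatrix_apply_ne _ _ _ h, Matrix.map_apply, Matrix.one_apply_ne h, h]
  constructor
  · intro hroot
    have hd : (μ • (1 : Matrix (Fin n) (Fin n) K) - M).det = 0 := by
      rw [← h2, ← h1]; exact hroot
    obtain ⟨x, hx, hx0⟩ := (Matrix.exists_mulVec_eq_zero_iff).2 hd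
    refine ⟨x, hx, ?_⟩
    rw [Matrix.sub_mulVec, sub_eq_zero, Matrix.smul_mulVec, Matrix.one_mulVec] at hx0
    exact hx0.symm
  · rintro ⟨x, hx, hMx⟩
    have h0 : (μ • (1 : Matrix (Fin n) (Fin n) K) - M) *ᵥ x = 0 := by
      rw [Matrix.sub_mulVec, Matrix.smul_mulVec, Matrix.one_mulVec, hMx, sub_self]
    have hdet := (Matrix.exists_mulVec_eq_zero_iff).1 ⟨x, hx, h0⟩
    show Polynomial.eval μ M.charpoly = 0
    rw [h1, h2, hdet]

lemma specSet_bddAbove {n : ℕ} (M : Matrix (Fin n) (Fin n) ℝ) :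
    BddAbove {r : ℝ | ∃ μ : ℂ, ((M.map (fun a => (a : ℂ))).charpoly).IsRoot μ
      ∧ r = ‖μ‖} := by
  have heq : {r : ℝ | ∃ μ : ℂ, ((M.map (fun a => (a : ℂ))).charpoly).IsRoot μ
      ∧ r = ‖μ‖}
      = (fun μ : ℂ => ‖μ‖) '' {μ : ℂ | ((M.map (fun a => (a : ℂ))).charpoly).IsRoot μ} := by
    ext r
    simp only [Set.mem_setOf_eq, Set.mem_image]
    exact ⟨fun ⟨μ, h, hr⟩ => ⟨μ, h, hr.symm⟩, fun ⟨μ, h, hr⟩ => ⟨μ, h, hr.symm⟩⟩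
  rw [heq]
  exact ((Polynomial.finite_setOf_isRoot (Matrix.charpoly_monic _).ne_zero).image _).bddAbove

lemma abs_root_le_specRad {n : ℕ} (M : Matrix (Fin n) (Fin n) ℝ) {μ : ℂ}
    (h : ((M.map (fun a => (a : ℂ))).charpoly).IsRoot μ) : ‖μ‖ ≤ specRad M :=
  le_csSup (specSet_bddAbove M) ⟨μ, h, rfl⟩

lemma specRad_nonneg {n : ℕ} (M : Matrix (Fin n) (Fin n) ℝ) : 0 ≤ specRad M := by
  rcases Set.eq_empty_or_nonempty
      {r : ℝ | ∃ μ : ℂ, ((M.map (fun a => (a : ℂ))).charpoly).IsRoot μ ∧ r = ‖μ‖}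
    with h | h
  · rw [specRad, h, Real.sSup_empty]
  · obtain ⟨r, μ, hμ, rfl⟩ := h
    exact le_trans (norm_nonneg μ) (abs_root_le_specRad M hμ)

lemma eigenvalues_le_specRad {n : ℕ} {M : Matrix (Fin n) (Fin n) ℝ} (hH : M.IsHermitian)
    (i : Fin n) : hH.eigenvalues i ≤ specRad M := by
  set v : Fin n → ℝ := ⇑(hH.eigenvectorBasis i) with hvdef
  have hv : M *ᵥ v = hH.eigenvalues i • v := hH.mulVec_eigenvectorBasis i
  have hvne : v ≠ 0 := by
    intro h0
    have hz : hH.eigenvectorBasis i = 0 := by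
      apply PiLp.ext; intro k; exact congrFun h0 k
    have h1 := hH.eigenvectorBasis.orthonormal.1 i
    rw [hz, norm_zero] at h1; norm_num at h1
  set x : Fin n → ℂ := fun k => ((v k : ℝ) : ℂ) with hxdef
  have hxne : x ≠ 0 := by
    intro h0
    apply hvne
    funext k
    have := congrFun h0 k
    simpa [hxdef] using this
  have hMx : (M.map (fun a => (a : ℂ))) *ᵥ x = (hH.eigenvalues i : ℂ) • x := by
    funext k
    have hcm := (Complex.ofRealHom.map_mulVec M v k).symm
    simp only [Complex.ofRealHom_eq_coe] at hcm
    calc (M.map (fun a => (a : ℂ)) *ᵥ x) k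
        = ((M *ᵥ v) k : ℂ) := by exact hcm
      _ = ((hH.eigenvalues i : ℂ) • x) k := by rw [hv]; simp [hxdef]
  have hroot : ((M.map (fun a => (a : ℂ))).charpoly).IsRoot (hH.eigenvalues i : ℂ) :=
    (isRoot_charpoly_iff _ _).2 ⟨x, hxne, hMx⟩
  calc hH.eigenvalues i ≤ |hH.eigenvalues i| := le_abs_self _
    _ = ‖((hH.eigenvalues i : ℝ) : ℂ)‖ := by rw [Complex.norm_real, Real.norm_eq_abs]
    _ ≤ specRad M := abs_root_le_specRad M hroot

lemma quad_form_le {n : ℕ} {M : Matrix (Fin n) (Fin n) ℝ} (hsymm : M.IsSymm) (y : Fin n → ℝ) :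
    y ⬝ᵥ (M *ᵥ y) ≤ specRad M * (y ⬝ᵥ y) := by
  have hH : M.IsHermitian := by
    rw [Matrix.IsHermitian, Matrix.conjTranspose_eq_transpose_of_trivial]; exact hsymm
  set U : Matrix (Fin n) (Fin n) ℝ := (hH.eigenvectorUnitary : Matrix (Fin n) (Fin n) ℝ) with hU
  have hUU : U * star U = 1 := (Matrix.mem_unitaryGroup_iff).mp hH.eigenvectorUnitary.2
  have hstar : star U = Uᵀ := Matrix.conjTranspose_eq_transpose_of_trivial U
  set z : Fin n → ℝ := y ᵥ* U with hz
  have hzy : z ⬝ᵥ z = y ⬝ᵥ y := by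
    calc z ⬝ᵥ z = z ⬝ᵥ (Uᵀ *ᵥ y) := by rw [Matrix.mulVec_transpose]
      _ = (y ᵥ* U) ⬝ᵥ (Uᵀ *ᵥ y) := rfl
      _ = y ⬝ᵥ (U *ᵥ (Uᵀ *ᵥ y)) := (Matrix.dotProduct_mulVec _ _ _).symm
      _ = y ⬝ᵥ ((U * Uᵀ) *ᵥ y) := by rw [Matrix.mulVec_mulVec]
      _ = y ⬝ᵥ y := by rw [← hstar, hUU, Matrix.one_mulVec]
  have hQ : y ⬝ᵥ (M *ᵥ y) = ∑ i, hH.eigenvalues i * z i ^ 2 := by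
    conv_lhs => rw [hH.spectral_theorem, Unitary.conjStarAlgAut_apply]
    rw [← Matrix.mulVec_mulVec, ← Matrix.mulVec_mulVec, Matrix.dotProduct_mulVec, hstar,
      Matrix.mulVec_transpose]
    show z ⬝ᵥ _ *ᵥ z = _
    simp only [dotProduct, Matrix.mulVec_diagonal]
    refine Finset.sum_congr rfl fun i _ => ?_
    simp [Function.comp]
    ring
  rw [hQ, ← hzy]
  calc ∑ i, hH.eigenvalues i * z i ^ 2 ≤ ∑ i, specRad M * z i ^ 2 :=
        Finset.sum_le_sum fun i _ =>
          mul_le_mul_of_nonneg_right (eigenvalues_le_specRad hH i) (sq_nonneg _)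
    _ = specRad M * (z ⬝ᵥ z) := by
        rw [← Finset.mul_sum]; congr 1; simp [dotProduct, sq]

lemma abs_eig_bound {n : ℕ} (A : Matrix (Fin n) (Fin n) ℝ) (hA : ∀ i j, 0 ≤ A i j) {μ : ℂ}
    {x : Fin n → ℂ} (h : (A.map (fun a => (a : ℂ))) *ᵥ x = μ • x) :
    ‖μ‖ * (∑ i, ‖x i‖ ^ 2)
      ≤ ∑ i, ∑ j, A i j * ‖x i‖ * ‖x j‖ := by
  set y : Fin n → ℝ := fun i => ‖x i‖ with hy
  have key : ∀ i, ‖μ‖ * y i ^ 2 ≤ ∑ j, A i j * y i * y j := by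
    intro i
    have h1 : ‖μ * x i‖ ≤ ∑ j, A i j * y j := by
      have hmx : μ * x i = ∑ j, (A i j : ℂ) * x j := by
        have hc := congrFun h i
        simp only [Pi.smul_apply, smul_eq_mul] at hc
        rw [← hc]
        simp [Matrix.mulVec, dotProduct, Matrix.map_apply]
      rw [hmx]
      calc ‖∑ j, (A i j : ℂ) * x j‖ ≤ ∑ j, ‖(A i j : ℂ) * x j‖ :=
            norm_sum_le _ _
        _ = ∑ j, A i j * y j := by
            refine Finset.sum_congr rfl fun j _ => ?_
            rw [norm_mul, Complex.norm_real, Real.norm_eq_abs, abs_of_nonneg (hA i j)]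
    calc ‖μ‖ * y i ^ 2 = ‖μ * x i‖ * y i := by
          rw [norm_mul]; ring
      _ ≤ (∑ j, A i j * y j) * y i :=
          mul_le_mul_of_nonneg_right h1 (norm_nonneg _)
      _ = ∑ j, A i j * y i * y j := by
          rw [Finset.sum_mul]; exact Finset.sum_congr rfl fun j _ => by ring
  calc ‖μ‖ * (∑ i, y i ^ 2) = ∑ i, ‖μ‖ * y i ^ 2 := Finset.mul_sum _ _ _
    _ ≤ ∑ i, ∑ j, A i j * y i * y j := Finset.sum_le_sum fun i _ => key i

/-- Let `R` be symmetric nonnegative with zero diagonal and `λ(R) = λ < 1`.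
If `σ = λ/(2-λ)` then `λ(R^σ) ≤ σ`. -/
theorem specRad_upperScale_le {n : ℕ} (R : Matrix (Fin n) (Fin n) ℝ)
    (hsymm : R.IsSymm) (hR : ∀ i j, 0 ≤ R i j) (hdiag : ∀ i, R i i = 0)
    (hlt : specRad R < 1) :
    specRad (upperScale R (specRad R / (2 - specRad R)))
      ≤ specRad R / (2 - specRad R) := by
  have hRsym : ∀ i j, R j i = R i j := fun i j => congrFun (congrFun hsymm i) j
  have hlam0 : 0 ≤ specRad R := specRad_nonneg R
  set lam := specRad R with hlam
  have h2 : (0 : ℝ) < 2 - lam := by linarith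
  set σ := lam / (2 - lam) with hσ
  have hσ0 : 0 ≤ σ := div_nonneg hlam0 h2.le
  set A := upperScale R σ with hAdef
  have hAnn : ∀ i j, 0 ≤ A i j := by
    intro i j
    simp only [hAdef, upperScale, Matrix.of_apply]
    split
    · exact mul_nonneg hσ0 (hR i j)
    · exact hR i j
  have hAsum : ∀ i j, A i j + A j i = (1 + σ) * R i j := by
    intro i j
    rcases lt_trichotomy i j with h | h | h
    · simp only [hAdef, upperScale, Matrix.of_apply, if_pos h, if_neg (not_lt.2 h.le)]
      rw [hRsym i j]; ring
    · subst h; simp [hAdef, upperScale, hdiag i]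
    · simp only [hAdef, upperScale, Matrix.of_apply, if_pos h, if_neg (not_lt.2 h.le)]
      rw [hRsym i j]; ring
  rcases Set.eq_empty_or_nonempty
      {r : ℝ | ∃ μ : ℂ, ((A.map (fun a => (a : ℂ))).charpoly).IsRoot μ ∧ r = ‖μ‖}
    with hS | hS
  · have h0 : specRad A = 0 := by rw [specRad, hS, Real.sSup_empty]
    rw [h0]; exact hσ0
  · refine csSup_le hS ?_
    rintro r ⟨μ, hroot, rfl⟩
    obtain ⟨x, hx, hMx⟩ := (isRoot_charpoly_iff _ _).1 hroot
    set y : Fin n → ℝ := fun i => ‖x i‖ with hy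
    have h1 : ‖μ‖ * (∑ i, y i ^ 2) ≤ ∑ i, ∑ j, A i j * y i * y j :=
      abs_eig_bound A hAnn hMx
    set N := ∑ i, y i ^ 2 with hN
    have hNpos : 0 < N := by
      obtain ⟨i, hi⟩ := Function.ne_iff.1 hx
      have h2' : 0 < y i ^ 2 := pow_pos (norm_pos_iff.mpr hi) 2
      have h3 : y i ^ 2 ≤ N := Finset.single_le_sum (f := fun i => y i ^ 2)
        (fun j _ => sq_nonneg _) (Finset.mem_univ i)
      linarith
    have hswap : ∑ i, ∑ j, A j i * y i * y j = ∑ i, ∑ j, A i j * y i * y j := by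
      rw [Finset.sum_comm]
      exact Finset.sum_congr rfl fun i _ => Finset.sum_congr rfl fun j _ => by ring
    have hT2 : (∑ i, ∑ j, A i j * y i * y j) * 2
        = (1 + σ) * ∑ i, ∑ j, R i j * y i * y j := by
      calc (∑ i, ∑ j, A i j * y i * y j) * 2
          = (∑ i, ∑ j, A i j * y i * y j) + ∑ i, ∑ j, A j i * y i * y j := by
            rw [hswap]; ring
        _ = ∑ i, ∑ j, (A i j * y i * y j + A j i * y i * y j) := by
            rw [← Finset.sum_add_distrib]
            exact Finset.sum_congr rfl fun i _ => by rw [← Finset.sum_add_distrib]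
        _ = ∑ i, ∑ j, (1 + σ) * (R i j * y i * y j) := by
            refine Finset.sum_congr rfl fun i _ => Finset.sum_congr rfl fun j _ => ?_
            linear_combination (y i * y j) * hAsum i j
        _ = (1 + σ) * ∑ i, ∑ j, R i j * y i * y j := by
            rw [Finset.mul_sum]
            exact Finset.sum_congr rfl fun i _ => (Finset.mul_sum _ _ _).symm
    have hQ : ∑ i, ∑ j, R i j * y i * y j ≤ lam * N := by
      have hq := quad_form_le hsymm y
      have hdp : y ⬝ᵥ (R *ᵥ y) = ∑ i, ∑ j, R i j * y i * y j := by
        simp only [dotProduct, Matrix.mulVec, Finset.mul_sum]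
        exact Finset.sum_congr rfl fun i _ => Finset.sum_congr rfl fun j _ => by ring
      have hyy : y ⬝ᵥ y = N := by
        simp only [dotProduct, hN, sq]
      rw [hdp, hyy] at hq
      exact hq
    have heq : (1 + σ) / 2 * lam = σ := by
      rw [hσ]; field_simp; ring
    have hfinal : ‖μ‖ * N ≤ σ * N := by nlinarith [hQ, hT2, h1, heq, hσ0]
    exact le_of_mul_le_mul_right hfinal hNpos
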